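/- Let f : ℝⁿ → ℝⁿ be of class C², let M := {x ∈ ℝⁿ | f(x) = 0} be nonempty, and suppose there is an open neighborhood G ⊆ ℝⁿ of M and an integer s with 0 < s < n such that dim(ker Df_x) = s for every x ∈ G. Then for every p ∈ M and every local coordinate system φ of M at p, the tangent space T_pM := Dφ_{φ(p)}⁻¹({y ∈ ℝⁿ | y_{s+1} = ⋯ = y_n = 0}) equals ker(Df_p). -/

import Mathlib

open Set

/-- Projection onto the coordinates `i ≥ s`. -/
noncomputable def projLast (n s : ℕ) :
    EuclideanSpace ℝ (Fin n) →ₗ[ℝ] (Fin (n - s) → ℝ) where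
  toFun y j := y ⟨s + j, by have := j.2; omega⟩
  map_add' x y := by ext j; simp
  map_smul' c x := by ext j; simp

theorem projLast_surjective (n s : ℕ) : Function.Surjective (projLast n s) := by
  intro w
  refine ⟨(WithLp.toLp 2 (fun i : Fin n => if h : s ≤ (i : ℕ) then w ⟨(i : ℕ) - s, by have := i.2; omega⟩ else 0) :
    EuclideanSpace ℝ (Fin n)), ?_⟩
  ext j
  simp only [projLast, LinearMap.coe_mk, AddHom.coe_mk, PiLp.toLp_apply]
  rw [dif_pos (Nat.le_add_right s j : s ≤ ((⟨s + (j:ℕ), by have := j.2; omega⟩ : Fin n) : ℕ))]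
  congr 1
  ext
  simp

/-- Under the constant-rank assumptions, for every `p ∈ M` and every
local coordinate system `φ` (a `C²` diffeomorphism onto its image, with inverse `ψ`,
flattening `M` to the first `s` coordinates), the tangent space
`T_pM = Dψ_{φ(p)}({y | y_{s+1} = ⋯ = y_n = 0})` equals `ker (Df_p)`. -/
theorem statement1
    (n s : ℕ) (hs0 : 0 < s) (hsn : s < n)
    (f : EuclideanSpace ℝ (Fin n) → EuclideanSpace ℝ (Fin n))
    (hf : ContDiff ℝ 2 f)
    (M : Set (EuclideanSpace ℝ (Fin n))) (hMdef : M = {x | f x = 0})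
    (hMne : M.Nonempty)
    (G : Set (EuclideanSpace ℝ (Fin n))) (hG : IsOpen G) (hMG : M ⊆ G)
    (hker : ∀ x ∈ G, Module.finrank ℝ (LinearMap.ker (fderiv ℝ f x : EuclideanSpace ℝ (Fin n) →ₗ[ℝ] EuclideanSpace ℝ (Fin n))) = s) :
    ∀ p ∈ M, ∀ U : Set (EuclideanSpace ℝ (Fin n)),
      ∀ φ ψ : EuclideanSpace ℝ (Fin n) → EuclideanSpace ℝ (Fin n),
        IsOpen U → p ∈ U →
        ContDiffOn ℝ 2 φ U → IsOpen (φ '' U) → ContDiffOn ℝ 2 ψ (φ '' U) →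
        (∀ z ∈ U, ψ (φ z) = z) → (∀ w ∈ φ '' U, φ (ψ w) = w) →
        M ∩ U = {x ∈ U | ∀ i : Fin n, s ≤ (i : ℕ) → φ x i = 0} →
        fderiv ℝ ψ (φ p) '' {y : EuclideanSpace ℝ (Fin n) | ∀ i : Fin n, s ≤ (i : ℕ) → y i = 0}
          = (LinearMap.ker (fderiv ℝ f p : EuclideanSpace ℝ (Fin n) →ₗ[ℝ] EuclideanSpace ℝ (Fin n)) : Set (EuclideanSpace ℝ (Fin n))) := by
  intro p hpM U φ ψ hU hpU hφ hφUopen hψ hψφ hφψ hMflat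
  classical
  have hpG : p ∈ G := hMG hpM
  have hpU' : U ∈ nhds p := hU.mem_nhds hpU
  have hφpU : φ p ∈ φ '' U := ⟨p, hpU, rfl⟩
  have hφpU' : φ '' U ∈ nhds (φ p) := hφUopen.mem_nhds hφpU
  have hpsiphip : ψ (φ p) = p := hψφ p hpU
  have hφd : DifferentiableAt ℝ φ p := (hφ.contDiffAt hpU').differentiableAt two_ne_zero
  have hψd : DifferentiableAt ℝ ψ (φ p) := (hψ.contDiffAt hφpU').differentiableAt two_ne_zero
  set A := fderiv ℝ φ p with hA
  set B := fderiv ℝ ψ (φ p) with hB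
  -- B ∘ A = id
  have hBA : B.comp A = ContinuousLinearMap.id ℝ _ := by
    have h1 : (ψ ∘ φ) =ᶠ[nhds p] id :=
      Filter.eventuallyEq_of_mem hpU' (fun x hx => hψφ x hx)
    have h2 : fderiv ℝ (ψ ∘ φ) p = fderiv ℝ id p := h1.fderiv_eq
    rwa [fderiv_comp p hψd hφd, fderiv_id] at h2
  have hAB : A.comp B = ContinuousLinearMap.id ℝ _ := by
    have h1 : (φ ∘ ψ) =ᶠ[nhds (φ p)] id :=
      Filter.eventuallyEq_of_mem hφpU' (fun x hx => hφψ x hx)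
    have h2 : fderiv ℝ (φ ∘ ψ) (φ p) = fderiv ℝ id (φ p) := h1.fderiv_eq
    rw [fderiv_comp (φ p) (by rw [hpsiphip]; exact hφd) hψd, fderiv_id, hpsiphip] at h2
    exact h2
  have hBA' : ∀ x, B (A x) = x := fun x => by
    have := ContinuousLinearMap.ext_iff.mp hBA x; simpa using this
  have hAB' : ∀ x, A (B x) = x := fun x => by
    have := ContinuousLinearMap.ext_iff.mp hAB x; simpa using this
  set e : EuclideanSpace ℝ (Fin n) ≃L[ℝ] EuclideanSpace ℝ (Fin n) :=
    ContinuousLinearEquiv.equivOfInverse A B hBA' hAB' with he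
  -- the subspace K
  set Ksub : Submodule ℝ (EuclideanSpace ℝ (Fin n)) := LinearMap.ker (projLast n s) with hKsub
  have hKset : (Ksub : Set (EuclideanSpace ℝ (Fin n)))
      = {y : EuclideanSpace ℝ (Fin n) | ∀ i : Fin n, s ≤ (i : ℕ) → y i = 0} := by
    ext y
    simp only [hKsub, SetLike.mem_coe, LinearMap.mem_ker, projLast, LinearMap.coe_mk,
      AddHom.coe_mk, mem_setOf_eq, funext_iff, Pi.zero_apply]
    constructor
    · intro h i hi
      have := h ⟨(i : ℕ) - s, by have := i.2; omega⟩
      convert this using 2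
      ext
      simp
      omega
    · intro h j
      exact h _ (by simp)
  have hKrank : Module.finrank ℝ Ksub = s := by
    have h1 := LinearMap.finrank_range_add_finrank_ker (projLast n s)
    rw [LinearMap.range_eq_top.mpr (projLast_surjective n s)] at h1
    rw [finrank_top, Module.finrank_fin_fun, finrank_euclideanSpace_fin, ← hKsub] at h1
    omega
  -- kernel inclusion
  have hfd : Differentiable ℝ f := hf.differentiable two_ne_zero
  have hpMU : p ∈ M ∩ U := ⟨hpM, hpU⟩
  rw [hMflat] at hpMU
  have hφp0 : ∀ i : Fin n, s ≤ (i : ℕ) → φ p i = 0 := hpMU.2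
  have key : ∀ v ∈ Ksub, fderiv ℝ f p (B v) = 0 := by
    intro v hv
    rw [← SetLike.mem_coe, hKset] at hv
    have hfdp : HasFDerivAt f (fderiv ℝ f p) (ψ (φ p)) := by
      rw [hpsiphip]; exact (hfd p).hasFDerivAt
    have hg : HasFDerivAt (f ∘ ψ) ((fderiv ℝ f p).comp B) (φ p) :=
      hfdp.comp (φ p) hψd.hasFDerivAt
    have hc0 : φ p + (0 : ℝ) • v = φ p := by simp
    have hc : HasDerivAt (fun t : ℝ => φ p + t • v) v 0 := by
      simpa using ((hasDerivAt_id (0 : ℝ)).smul_const v).const_add (φ p)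
    have hg0 : HasFDerivAt (f ∘ ψ) ((fderiv ℝ f p).comp B)
        ((fun t : ℝ => φ p + t • v) 0) := by simpa using hg
    have hline : HasDerivAt (fun t : ℝ => f (ψ (φ p + t • v)))
        ((fderiv ℝ f p).comp B v) 0 := HasFDerivAt.comp_hasDerivAt (l := f ∘ ψ) 0 hg0 hc
    have hcont : Continuous fun t : ℝ => φ p + t • v := by continuity
    have hmem : ∀ᶠ t : ℝ in nhds 0, φ p + t • v ∈ φ '' U := by
      have := hcont.continuousAt (x := (0 : ℝ))
      have h := this.preimage_mem_nhds (by rw [hc0]; exact hφpU')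
      exact h
    have hev : (fun t : ℝ => f (ψ (φ p + t • v)))
        =ᶠ[nhds (0 : ℝ)] fun _ => (0 : EuclideanSpace ℝ (Fin n)) := by
      filter_upwards [hmem] with t ht
      have hxU : ψ (φ p + t • v) ∈ U := by
        obtain ⟨z, hz, hz2⟩ := ht
        rw [← hz2, hψφ z hz]; exact hz
      have hxM : ψ (φ p + t • v) ∈ M ∩ U := by
        rw [hMflat]
        refine ⟨hxU, fun i hi => ?_⟩
        rw [hφψ _ ht]
        have : (φ p + t • v) i = φ p i + t * v i := by
          simp [PiLp.add_apply, PiLp.smul_apply]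
        rw [this, hφp0 i hi, hv i hi]
        ring
      have := hxM.1
      rw [hMdef] at this
      exact this
    have hzero : HasDerivAt (fun t : ℝ => f (ψ (φ p + t • v)))
        (0 : EuclideanSpace ℝ (Fin n)) 0 := by
      exact (hasDerivAt_const (0 : ℝ) (0 : EuclideanSpace ℝ (Fin n))).congr_of_eventuallyEq hev
    have := hline.unique hzero
    simpa using this
  -- dimension count
  have hBlin : B.toLinearMap = (e.symm.toLinearEquiv : EuclideanSpace ℝ (Fin n) →ₗ[ℝ] EuclideanSpace ℝ (Fin n)) := rfl
  have hmaprank : Module.finrank ℝ (Ksub.map B.toLinearMap) = s := by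
    rw [hBlin, LinearEquiv.finrank_map_eq, hKrank]
  have hmain : Ksub.map B.toLinearMap = LinearMap.ker (fderiv ℝ f p : EuclideanSpace ℝ (Fin n) →ₗ[ℝ] EuclideanSpace ℝ (Fin n)) := by
    apply Submodule.eq_of_le_of_finrank_eq
    · rintro x ⟨v, hv, rfl⟩
      exact LinearMap.mem_ker.mpr (key v hv)
    · rw [hmaprank, hker p hpG]
  calc B '' {y : EuclideanSpace ℝ (Fin n) | ∀ i : Fin n, s ≤ (i : ℕ) → y i = 0}
      = B '' (Ksub : Set (EuclideanSpace ℝ (Fin n))) := by rw [hKset]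
    _ = (Ksub.map B.toLinearMap : Set (EuclideanSpace ℝ (Fin n))) := by
        rw [Submodule.map_coe]; rfl
    _ = (LinearMap.ker (fderiv ℝ f p : EuclideanSpace ℝ (Fin n) →ₗ[ℝ] EuclideanSpace ℝ (Fin n)) : Set (EuclideanSpace ℝ (Fin n))) := by rw [hmain]
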